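/- Δ-bisimilarity implies NCL-equivalence: if Z is a Δ-bisimulation on (the disjoint union of) two Kripke models M and N with (s,t) ∈ Z, then M,s and N,t satisfy exactly the same formulas of the language built from propositional atoms, negation, conjunction, and the Δ operator. -/
import Mathlib


/-- Formulas of the knowing-whether language NCL: atoms, ¬, ∧, Δ. -/
inductive NCLForm where
  | atom : ℕ → NCLForm
  | neg : NCLForm → NCLForm
  | conj : NCLForm → NCLForm → NCLForm
  | delta : NCLForm → NCLForm

/-- Satisfaction in a Kripke model (S, R, V). -/
def nclSat {S : Type*} (R : S → S → Prop) (V : ℕ → S → Prop) : NCLForm → S → Prop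
  | .atom n => fun s => V n s
  | .neg φ => fun s => ¬ nclSat R V φ s
  | .conj φ ψ => fun s => nclSat R V φ s ∧ nclSat R V ψ s
  | .delta φ => fun s =>
      (∀ t, R s t → nclSat R V φ t) ∨ (∀ t, R s t → ¬ nclSat R V φ t)

/-- Z is a Δ-bisimulation on the model (S, R, V). -/
def DeltaBisim {S : Type*} (R : S → S → Prop) (V : ℕ → S → Prop)
    (Z : S → S → Prop) : Prop :=
  (∃ a b, Z a b) ∧
  ∀ s s', Z s s' →
    ((∀ n, V n s ↔ V n s') ∧
     ((∃ t1 t2, R s t1 ∧ R s t2 ∧ ¬ Z t1 t2) →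
        ∀ t, R s t → ∃ t', R s' t' ∧ Z t t') ∧
     ((∃ t1' t2', R s' t1' ∧ R s' t2' ∧ ¬ Z t1' t2') →
        ∀ t', R s' t' → ∃ t, R s t ∧ Z t t'))

/-- Disjoint union of the accessibility relations of two models. -/
def unionRel {S T : Type*} (R1 : S → S → Prop) (R2 : T → T → Prop) :
    S ⊕ T → S ⊕ T → Prop
  | .inl a, .inl b => R1 a b
  | .inr a, .inr b => R2 a b
  | _, _ => False

/-- Disjoint union of the valuations of two models. -/
def unionVal {S T : Type*} (V1 : ℕ → S → Prop) (V2 : ℕ → T → Prop)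
    (n : ℕ) : S ⊕ T → Prop
  | .inl a => V1 n a
  | .inr b => V2 n b

/-- Δ-bisimilarity implies NCL-equivalence: if Z is a Δ-bisimulation on the
disjoint union of M = (S,R1,V1) and N = (T,R2,V2) with (inl s, inr t) ∈ Z, then
M,s and N,t satisfy exactly the same NCL formulas. -/
lemma ncl_bisim {S : Type*} (R : S → S → Prop) (V : ℕ → S → Prop)
    (Z : S → S → Prop) (hZ : DeltaBisim R V Z) :
    ∀ φ u v, Z u v → (nclSat R V φ u ↔ nclSat R V φ v) := by
  intro φ
  induction φ with
  | atom n => intro u v h; exact (hZ.2 u v h).1 n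
  | neg φ ih => intro u v h; simp only [nclSat]; rw [ih u v h]
  | conj φ ψ ih1 ih2 => intro u v h; simp only [nclSat]; rw [ih1 u v h, ih2 u v h]
  | delta φ ih =>
    intro u v h
    obtain ⟨_, hforth, hback⟩ := hZ.2 u v h
    constructor
    · intro hu
      by_cases hex : ∃ t1' t2', R v t1' ∧ R v t2' ∧ ¬ Z t1' t2'
      · have hb := hback hex
        cases hu with
        | inl hall =>
          left; intro t' ht'
          obtain ⟨w, hwR, hwZ⟩ := hb t' ht'
          exact (ih w t' hwZ).1 (hall w hwR)
        | inr hnone =>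
          right; intro t' ht' hφ
          obtain ⟨w, hwR, hwZ⟩ := hb t' ht'
          exact hnone w hwR ((ih w t' hwZ).2 hφ)
      · push_neg at hex
        by_cases hφ : ∃ t0, R v t0 ∧ nclSat R V φ t0
        · obtain ⟨t0, ht0, hs0⟩ := hφ
          left; intro t' ht'
          exact (ih t' t0 (hex t' t0 ht' ht0)).2 hs0
        · push_neg at hφ
          right; intro t' ht'; exact hφ t' ht'
    · intro hv
      by_cases hex : ∃ t1 t2, R u t1 ∧ R u t2 ∧ ¬ Z t1 t2
      · have hf := hforth hex
        cases hv with
        | inl hall =>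
          left; intro w hw
          obtain ⟨t', ht'R, ht'Z⟩ := hf w hw
          exact (ih w t' ht'Z).2 (hall t' ht'R)
        | inr hnone =>
          right; intro w hw hφ
          obtain ⟨t', ht'R, ht'Z⟩ := hf w hw
          exact hnone t' ht'R ((ih w t' ht'Z).1 hφ)
      · push_neg at hex
        by_cases hφ : ∃ t0, R u t0 ∧ nclSat R V φ t0
        · obtain ⟨t0, ht0, hs0⟩ := hφ
          left; intro w hw
          exact (ih w t0 (hex w t0 hw ht0)).2 hs0
        · push_neg at hφ
          right; intro w hw; exact hφ w hw

lemma ncl_inl {S T : Type*} (R1 : S → S → Prop) (V1 : ℕ → S → Prop)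
    (R2 : T → T → Prop) (V2 : ℕ → T → Prop) :
    ∀ φ s, nclSat (unionRel R1 R2) (unionVal V1 V2) φ (Sum.inl s) ↔ nclSat R1 V1 φ s := by
  intro φ
  induction φ with
  | atom n => intro s; simp [nclSat, unionVal]
  | neg φ ih => intro s; simp only [nclSat]; rw [ih s]
  | conj φ ψ ih1 ih2 => intro s; simp only [nclSat]; rw [ih1 s, ih2 s]
  | delta φ ih =>
    intro s
    simp only [nclSat]
    have h1 : (∀ u, unionRel R1 R2 (Sum.inl s) u → nclSat (unionRel R1 R2) (unionVal V1 V2) φ u)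
        ↔ (∀ x, R1 s x → nclSat R1 V1 φ x) := by
      constructor
      · intro h x hx; exact (ih x).1 (h (Sum.inl x) hx)
      · intro h u hu
        cases u with
        | inl x => exact (ih x).2 (h x hu)
        | inr y => exact absurd hu (by simp [unionRel])
    have h2 : (∀ u, unionRel R1 R2 (Sum.inl s) u → ¬ nclSat (unionRel R1 R2) (unionVal V1 V2) φ u)
        ↔ (∀ x, R1 s x → ¬ nclSat R1 V1 φ x) := by
      constructor
      · intro h x hx; exact fun hφ => h (Sum.inl x) hx ((ih x).2 hφ)
      · intro h u hu
        cases u with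
        | inl x => exact fun hφ => h x hu ((ih x).1 hφ)
        | inr y => exact absurd hu (by simp [unionRel])
    rw [h1, h2]

lemma ncl_inr {S T : Type*} (R1 : S → S → Prop) (V1 : ℕ → S → Prop)
    (R2 : T → T → Prop) (V2 : ℕ → T → Prop) :
    ∀ φ t, nclSat (unionRel R1 R2) (unionVal V1 V2) φ (Sum.inr t) ↔ nclSat R2 V2 φ t := by
  intro φ
  induction φ with
  | atom n => intro t; simp [nclSat, unionVal]
  | neg φ ih => intro t; simp only [nclSat]; rw [ih t]
  | conj φ ψ ih1 ih2 => intro t; simp only [nclSat]; rw [ih1 t, ih2 t]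
  | delta φ ih =>
    intro t
    simp only [nclSat]
    have h1 : (∀ u, unionRel R1 R2 (Sum.inr t) u → nclSat (unionRel R1 R2) (unionVal V1 V2) φ u)
        ↔ (∀ y, R2 t y → nclSat R2 V2 φ y) := by
      constructor
      · intro h y hy; exact (ih y).1 (h (Sum.inr y) hy)
      · intro h u hu
        cases u with
        | inl x => exact absurd hu (by simp [unionRel])
        | inr y => exact (ih y).2 (h y hu)
    have h2 : (∀ u, unionRel R1 R2 (Sum.inr t) u → ¬ nclSat (unionRel R1 R2) (unionVal V1 V2) φ u)
        ↔ (∀ y, R2 t y → ¬ nclSat R2 V2 φ y) := by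
      constructor
      · intro h y hy; exact fun hφ => h (Sum.inr y) hy ((ih y).2 hφ)
      · intro h u hu
        cases u with
        | inl x => exact absurd hu (by simp [unionRel])
        | inr y => exact fun hφ => h y hu ((ih y).1 hφ)
    rw [h1, h2]

theorem deltaBisim_ncl_equiv {S T : Type*}
    (R1 : S → S → Prop) (V1 : ℕ → S → Prop)
    (R2 : T → T → Prop) (V2 : ℕ → T → Prop)
    (Z : S ⊕ T → S ⊕ T → Prop)
    (hZ : DeltaBisim (unionRel R1 R2) (unionVal V1 V2) Z)
    (s : S) (t : T) (hst : Z (.inl s) (.inr t)) :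
    ∀ φ : NCLForm, nclSat R1 V1 φ s ↔ nclSat R2 V2 φ t := by
  intro φ
  rw [← ncl_inl R1 V1 R2 V2 φ s, ← ncl_inr R1 V1 R2 V2 φ t]
  exact ncl_bisim _ _ Z hZ φ _ _ hst
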